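/- The fully-expanded sum over binary paths of the hypergeometric path weights times η(S_N) equals the hypergeometric expectation: Σ_{(x_1,...,x_N) ∈ {0,1}^N} ∏_{n=1}^N p_n(S_{n-1})^{x_n}(1-p_n(S_{n-1}))^{1-x_n} η(S_N) = Σ_{m} η(m)·C(ν₁,m)C(ν₂,N-m)/C(ν₁+ν₂,N), where the path weight depends only on S_N and the number of paths with S_N = m is C(N,m). -/

import Mathlib

open Finset

lemma max_cast (a b : ℕ) : max 0 ((a:ℝ) - b) = ((a - b : ℕ) : ℝ) := by
  rcases le_total a b with h | h
  · rw [Nat.sub_eq_zero_of_le h, max_eq_left]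
    · simp
    · simp only [sub_nonpos]; exact_mod_cast h
  · rw [Nat.cast_sub h, max_eq_right]
    simp only [sub_nonneg]; exact_mod_cast h

lemma path_prod (ν₁ ν₂ : ℕ) (y : ℕ → ℕ) (hy : ∀ i, y i ≤ 1) :
    ∀ n, n ≤ ν₁ + ν₂ →
    ∏ i ∈ range n,
      ((((ν₁ - (∑ j ∈ range i, y j) : ℕ) : ℝ) / ((ν₁ + ν₂ - i : ℕ) : ℝ)) ^ (y i) *
       (1 - ((ν₁ - (∑ j ∈ range i, y j) : ℕ) : ℝ) / ((ν₁ + ν₂ - i : ℕ) : ℝ)) ^ (1 - y i))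
    = (ν₁.descFactorial (∑ j ∈ range n, y j) : ℝ) *
      (ν₂.descFactorial (n - ∑ j ∈ range n, y j) : ℝ) /
      ((ν₁ + ν₂).descFactorial n : ℝ) := by
  intro n
  induction n with
  | zero => simp
  | succ n ih =>
    intro hn
    have hn' : n < ν₁ + ν₂ := hn
    set s := ∑ j ∈ range n, y j with hs
    have hsn : s ≤ n := by
      calc s ≤ ∑ j ∈ range n, 1 := Finset.sum_le_sum (fun j _ => hy j)
      _ = n := by simp
    have hC : ((ν₁ + ν₂).descFactorial n : ℝ) ≠ 0 := by
      have : (ν₁ + ν₂).descFactorial n ≠ 0 := by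
        rw [Ne, Nat.descFactorial_eq_zero_iff_lt]; omega
      exact_mod_cast this
    have hd : ((ν₁ + ν₂ - n : ℕ) : ℝ) ≠ 0 := by
      have : ν₁ + ν₂ - n ≠ 0 := by omega
      exact_mod_cast this
    have hCsucc : (ν₁ + ν₂).descFactorial (n+1) = (ν₁ + ν₂ - n) * (ν₁ + ν₂).descFactorial n :=
      Nat.descFactorial_succ _ _
    rw [Finset.prod_range_succ, ih (le_of_lt hn'), Finset.sum_range_succ, ← hs]
    have hyn := hy n
    interval_cases h : y n
    · -- y n = 0
      simp only [pow_zero, pow_one, Nat.add_zero, one_mul]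
      by_cases hA : ν₁ < s
      · rw [Nat.descFactorial_eq_zero_iff_lt.mpr hA]; ring
      push_neg at hA
      by_cases hB : ν₂ < n - s
      · rw [Nat.descFactorial_eq_zero_iff_lt.mpr hB,
            Nat.descFactorial_eq_zero_iff_lt.mpr (show ν₂ < n + 1 - s by omega)]
        ring
      push_neg at hB
      have hz : n + 1 - s = (n - s) + 1 := by omega
      rw [hz, Nat.descFactorial_succ, hCsucc]
      have h1p : 1 - ((ν₁ - s : ℕ) : ℝ) / ((ν₁ + ν₂ - n : ℕ) : ℝ)
          = ((ν₂ - (n - s) : ℕ) : ℝ) / ((ν₁ + ν₂ - n : ℕ) : ℝ) := by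
        field_simp
        have : (ν₁ + ν₂ - n) = (ν₂ - (n - s)) + (ν₁ - s) := by omega
        rw [this]
        push_cast [Nat.cast_sub hA, Nat.cast_sub hB, Nat.cast_sub hsn]
        ring
      rw [h1p]
      push_cast
      field_simp
    · -- y n = 1
      simp only [pow_one, Nat.sub_self, pow_zero, mul_one]
      by_cases hA : ν₁ ≤ s
      · rw [Nat.descFactorial_eq_zero_iff_lt.mpr (show ν₁ < s + 1 by omega),
            Nat.sub_eq_zero_of_le hA]
        push_cast; ring
      push_neg at hA
      by_cases hB : ν₂ < n - s
      · rw [show n + 1 - (s+1) = n - s by omega, Nat.descFactorial_eq_zero_iff_lt.mpr hB]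
        ring
      push_neg at hB
      rw [show n + 1 - (s+1) = n - s by omega, Nat.descFactorial_succ, hCsucc]
      push_cast
      field_simp

lemma count_fiber (N m : ℕ) :
    (Finset.univ.filter fun x : Fin N → Fin 2 => (∑ i, (x i : ℕ)) = m).card = N.choose m := by
  classical
  have hv : ∀ v : Fin 2, (v : ℕ) = if v = 1 then 1 else 0 := by decide
  have hv2 : ∀ v : Fin 2, (if v = 1 then (1 : Fin 2) else 0) = v := by decide
  have : N.choose m = ((Finset.univ : Finset (Fin N)).powersetCard m).card := by
    rw [Finset.card_powersetCard, Finset.card_univ, Fintype.card_fin]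
  rw [this]
  apply Finset.card_bij' (fun x _ => Finset.univ.filter (fun j => x j = 1))
    (fun s _ => fun j => if j ∈ s then 1 else 0)
  · intro x hx
    funext j
    rw [← hv2 (x j)]
    by_cases h : x j = 1 <;> simp [h]
  · intro s hs
    ext j
    simp only [Finset.mem_filter, Finset.mem_univ, true_and]
    by_cases h : j ∈ s <;> simp [h]
  · intro x hx
    simp only [Finset.mem_filter, Finset.mem_univ, true_and] at hx
    rw [Finset.mem_powersetCard]
    refine ⟨Finset.subset_univ _, ?_⟩
    rw [Finset.card_filter, ← hx]
    exact Finset.sum_congr rfl fun j _ => (hv (x j)).symm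
  · intro s hs
    rw [Finset.mem_powersetCard] at hs
    simp only [Finset.mem_filter, Finset.mem_univ, true_and]
    trans ∑ j : Fin N, if j ∈ s then 1 else 0
    · exact Finset.sum_congr rfl fun j _ => by split <;> simp
    · rw [Finset.sum_ite_mem, Finset.univ_inter, ← Finset.card_eq_sum_ones, hs.2]

theorem stmt_8 (ν₁ ν₂ N : ℕ) (hν₁ : 0 < ν₁) (hν₂ : 0 < ν₂) (hN : 0 < N)
    (hsum : ν₁ + ν₂ ≥ N) (η : ℕ → ℝ)
    (S : (Fin N → Fin 2) → ℕ → ℕ)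
    (hS : ∀ x n, S x n = ∑ i : Fin N, if (i : ℕ) < n then (x i : ℕ) else 0) :
    ∑ x : Fin N → Fin 2,
      (∏ i : Fin N,
        (max 0 ((ν₁ : ℝ) - S x i) / ((ν₁ : ℝ) + ν₂ - (i : ℕ))) ^ (x i : ℕ) *
        (1 - max 0 ((ν₁ : ℝ) - S x i) / ((ν₁ : ℝ) + ν₂ - (i : ℕ))) ^ (1 - (x i : ℕ)))
      * η (S x N)
    = ∑ m ∈ Finset.Icc (N - ν₂) (min ν₁ N),
        η m * ((ν₁.choose m : ℝ) * (ν₂.choose (N - m) : ℝ) / ((ν₁ + ν₂).choose N : ℝ)) := by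
  classical
  set T := ν₁ + ν₂ with hT
  set W : ℕ → ℝ := fun m =>
    (ν₁.descFactorial m : ℝ) * (ν₂.descFactorial (N - m) : ℝ) / (T.descFactorial N : ℝ)
    with hW
  -- step 1: per-path product
  have key : ∀ x : Fin N → Fin 2,
      (∏ i : Fin N,
        (max 0 ((ν₁ : ℝ) - S x i) / ((ν₁ : ℝ) + ν₂ - (i : ℕ))) ^ (x i : ℕ) *
        (1 - max 0 ((ν₁ : ℝ) - S x i) / ((ν₁ : ℝ) + ν₂ - (i : ℕ))) ^ (1 - (x i : ℕ)))
      = W (S x N) := by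
    intro x
    set y : ℕ → ℕ := fun i => if h : i < N then (x ⟨i, h⟩ : ℕ) else 0 with hy
    have hy1 : ∀ i, y i ≤ 1 := by
      intro i; simp only [hy]; split
      · exact Nat.lt_succ_iff.mp (Fin.is_lt _)
      · exact Nat.zero_le 1
    have hyx : ∀ i : Fin N, y (i : ℕ) = (x i : ℕ) := by
      intro i; simp only [hy, i.isLt, dif_pos, Fin.eta]
    have hSn : ∀ n, n ≤ N → S x n = ∑ j ∈ range n, y j := by
      intro n hn
      rw [hS]
      have e : (∑ i : Fin N, if (i:ℕ) < n then (x i : ℕ) else 0)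
          = ∑ i : Fin N, (fun k => if k < n then y k else 0) (i : ℕ) :=
        Finset.sum_congr rfl fun i _ => by simp only [hyx]
      rw [e, Fin.sum_univ_eq_sum_range (fun k => if k < n then y k else 0) N, ← Finset.sum_filter]
      congr 1
      ext j; simp only [mem_filter, mem_range]; omega
    have hfac : ∀ i : Fin N,
        max 0 ((ν₁ : ℝ) - S x (i:ℕ)) / ((ν₁ : ℝ) + ν₂ - (i : ℕ))
        = ((ν₁ - (∑ j ∈ range (i:ℕ), y j) : ℕ) : ℝ) / ((T - (i:ℕ) : ℕ) : ℝ) := by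
      intro i
      rw [hSn (i:ℕ) i.isLt.le, max_cast]
      congr 1
      rw [Nat.cast_sub (by omega : (i:ℕ) ≤ T), hT]
      push_cast; ring
    set G : ℕ → ℝ := fun k =>
      (((ν₁ - (∑ j ∈ range k, y j) : ℕ) : ℝ) / ((T - k : ℕ) : ℝ)) ^ (y k) *
      (1 - ((ν₁ - (∑ j ∈ range k, y j) : ℕ) : ℝ) / ((T - k : ℕ) : ℝ)) ^ (1 - y k) with hG
    have e2 : (∏ i : Fin N,
        (max 0 ((ν₁ : ℝ) - S x i) / ((ν₁ : ℝ) + ν₂ - (i : ℕ))) ^ (x i : ℕ) *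
        (1 - max 0 ((ν₁ : ℝ) - S x i) / ((ν₁ : ℝ) + ν₂ - (i : ℕ))) ^ (1 - (x i : ℕ)))
        = ∏ i : Fin N, G (i : ℕ) := by
      apply Finset.prod_congr rfl
      intro i _
      rw [hG]
      simp only [hfac i, hyx i]
    rw [e2, Fin.prod_univ_eq_prod_range G N, hG, hT]
    rw [path_prod ν₁ ν₂ y hy1 N hsum, hSn N le_rfl, hW, hT]
  -- step 2: sum over fibers
  have hSN : ∀ x : Fin N → Fin 2, S x N = ∑ i, (x i : ℕ) := by
    intro x
    rw [hS]
    exact Finset.sum_congr rfl fun i _ => by simp [Fin.is_lt i]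
  have hmap : ∀ x : Fin N → Fin 2, x ∈ (Finset.univ : Finset (Fin N → Fin 2)) →
      S x N ∈ range (N+1) := by
    intro x _
    rw [mem_range, Nat.lt_succ_iff, hSN]
    calc (∑ i, (x i : ℕ)) ≤ ∑ _i : Fin N, 1 :=
          Finset.sum_le_sum fun i _ => Nat.lt_succ_iff.mp (Fin.is_lt _)
    _ = N := by simp
  have hsub : Icc (N - ν₂) (min ν₁ N) ⊆ range (N+1) := by
    intro m hm; rw [mem_Icc] at hm; rw [mem_range]; omega
  have hTN : ((T.choose N : ℕ) : ℝ) ≠ 0 := by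
    have := Nat.choose_pos hsum; positivity
  calc ∑ x : Fin N → Fin 2,
      (∏ i : Fin N,
        (max 0 ((ν₁ : ℝ) - S x i) / ((ν₁ : ℝ) + ν₂ - (i : ℕ))) ^ (x i : ℕ) *
        (1 - max 0 ((ν₁ : ℝ) - S x i) / ((ν₁ : ℝ) + ν₂ - (i : ℕ))) ^ (1 - (x i : ℕ)))
      * η (S x N)
      = ∑ x : Fin N → Fin 2, W (S x N) * η (S x N) :=
        Finset.sum_congr rfl fun x _ => by rw [key x]
  _ = ∑ m ∈ range (N+1), ∑ x ∈ Finset.univ.filter (fun x : Fin N → Fin 2 => S x N = m),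
        (W (S x N) * η (S x N)) :=
        (Finset.sum_fiberwise_of_maps_to hmap _).symm
  _ = ∑ m ∈ range (N+1), (N.choose m : ℝ) * (W m * η m) := by
      apply Finset.sum_congr rfl
      intro m _
      have econg : ∑ x ∈ Finset.univ.filter (fun x : Fin N → Fin 2 => S x N = m),
          (W (S x N) * η (S x N))
          = ∑ _x ∈ Finset.univ.filter (fun x : Fin N → Fin 2 => S x N = m), (W m * η m) :=
        Finset.sum_congr rfl fun x hx => by rw [(Finset.mem_filter.mp hx).2]
      rw [econg, Finset.sum_const, nsmul_eq_mul]
      congr 2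
      have e3 : (Finset.univ.filter fun x : Fin N → Fin 2 => S x N = m)
          = (Finset.univ.filter fun x : Fin N → Fin 2 => (∑ i, (x i : ℕ)) = m) :=
        Finset.filter_congr fun x _ => by rw [hSN]
      rw [e3, count_fiber]
  _ = ∑ m ∈ range (N+1),
        η m * ((ν₁.choose m : ℝ) * (ν₂.choose (N - m) : ℝ) / ((T.choose N : ℕ) : ℝ)) := by
      apply Finset.sum_congr rfl
      intro m hm
      rw [mem_range, Nat.lt_succ_iff] at hm
      simp only [hW]
      have h1 : (ν₁.descFactorial m : ℝ) = (Nat.factorial m : ℝ) * ν₁.choose m := by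
        exact_mod_cast Nat.descFactorial_eq_factorial_mul_choose ν₁ m
      have h2 : (ν₂.descFactorial (N - m) : ℝ) = (Nat.factorial (N-m) : ℝ) * ν₂.choose (N - m) := by
        exact_mod_cast Nat.descFactorial_eq_factorial_mul_choose ν₂ (N - m)
      have h3 : (T.descFactorial N : ℝ) = (Nat.factorial N : ℝ) * T.choose N := by
        exact_mod_cast Nat.descFactorial_eq_factorial_mul_choose T N
      have h4 : ((N.choose m : ℕ) : ℝ) * Nat.factorial m * Nat.factorial (N - m) = (Nat.factorial N : ℝ) := by
        exact_mod_cast Nat.choose_mul_factorial_mul_factorial hm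
      have hne1 : ((Nat.factorial N : ℕ) : ℝ) ≠ 0 := by positivity
      have hne2 : ((Nat.factorial m : ℕ) : ℝ) ≠ 0 := by positivity
      have hne3 : ((Nat.factorial (N - m) : ℕ) : ℝ) ≠ 0 := by positivity
      rw [h1, h2, h3]
      field_simp
      linear_combination (η m * (ν₁.choose m : ℝ) * (ν₂.choose (N - m) : ℝ)) * h4
  _ = ∑ m ∈ Icc (N - ν₂) (min ν₁ N),
        η m * ((ν₁.choose m : ℝ) * (ν₂.choose (N - m) : ℝ) / ((ν₁ + ν₂).choose N : ℝ)) := by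
      rw [← hT]
      symm
      apply Finset.sum_subset hsub
      intro m hm hnot
      rw [mem_range, Nat.lt_succ_iff] at hm
      rw [mem_Icc, not_and_or, not_le, not_le] at hnot
      rcases hnot with h | h
      · rw [Nat.choose_eq_zero_of_lt (show ν₂ < N - m by omega)]
        simp
      · rw [Nat.choose_eq_zero_of_lt (show ν₁ < m by omega)]
        simp
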